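/- Let Y be a simplicial set and δ_0, …, δ_n pairwise commuting simplicial automorphisms of Y. For a q-simplex w of Δ[n] (a monotone map w : {0,…,q} → {0,…,n}) let m_k(w) be the number of p with w(p) = k, and define α_q : Y_q × Δ[n]_q → Y_q × Δ[n]_q by α_q(y, w) = ((δ_0^{1−m_0(w)} ∘ δ_1^{1−m_1(w)} ∘ ⋯ ∘ δ_n^{1−m_n(w)})(y), w). Then α intertwines the untwisted and twisted faces: for all q ≥ 1 and all 0 ≤ i ≤ q, d_i^δ(α_q(y, w)) = α_{q−1}(d_i y, d_i w). -/

import Mathlib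

open CategoryTheory Simplicial

universe u

namespace TwistedDelta

/-- The `q`-simplices of the standard simplicial `n`-simplex `Δ[n]`:
monotone maps `{0,…,q} → {0,…,n}`. -/
def DeltaSimp (n q : ℕ) : Type :=
  { w : Fin (q + 1) → Fin (n + 1) // Monotone w }

/-- The face `d_i` of `Δ[n]`, precomposing with the `i`-th coface (skipping `i`). -/
def DeltaSimp.face {n q : ℕ} (i : Fin (q + 2)) (w : DeltaSimp n (q + 1)) : DeltaSimp n q :=
  ⟨w.1 ∘ i.succAbove, w.2.comp (Fin.strictMono_succAbove i).monotone⟩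

/-- The degeneracy `s_i` of `Δ[n]`, precomposing with the `i`-th codegeneracy (repeating `i`). -/
def DeltaSimp.degen {n q : ℕ} (i : Fin (q + 1)) (w : DeltaSimp n q) : DeltaSimp n (q + 1) :=
  ⟨w.1 ∘ i.predAbove, w.2.comp (Fin.predAbove_right_monotone i)⟩

/-- `m_k(w)`: the number of `p` with `w(p) = k`. -/
def mult {n q : ℕ} (k : Fin (n + 1)) (w : DeltaSimp n q) : ℕ :=
  (Finset.univ.filter fun p => w.1 p = k).card

/-- The untwisting automorphism `δ_0^{1−m_0(w)} ∘ δ_1^{1−m_1(w)} ∘ ⋯ ∘ δ_n^{1−m_n(w)}`. -/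
def untwist {n : ℕ} (Y : SSet.{u}) (δ : Fin (n + 1) → Aut Y) {q : ℕ} (w : DeltaSimp n q) :
    Aut Y :=
  (List.ofFn fun k => (δ k) ^ ((1 : ℤ) - mult k w)).prod

/-- The map `α_q : Y_q × Δ[n]_q → Y_q × Δ[n]_q`,
`α_q(y, w) = ((δ_0^{1−m_0(w)} ∘ ⋯ ∘ δ_n^{1−m_n(w)})(y), w)`. -/
def alphaMap {n : ℕ} (Y : SSet.{u}) (δ : Fin (n + 1) → Aut Y) (q : ℕ) :
    Y _⦋q⦌ × DeltaSimp n q → Y _⦋q⦌ × DeltaSimp n q :=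
  fun p => ((untwist Y δ p.2).hom.app (Opposite.op (SimplexCategory.mk q)) p.1, p.2)

/-- The twisted face `d_i^δ(y, w) = (δ_{w(i)}(d_i y), d_i w)` on `Y_q × Δ[n]_q`. -/
def twistedFace {n : ℕ} (Y : SSet.{u}) (δ : Fin (n + 1) → Aut Y) {q : ℕ}
    (i : Fin (q + 2)) :
    Y _⦋q + 1⦌ × DeltaSimp n (q + 1) → Y _⦋q⦌ × DeltaSimp n q :=
  fun p => ((δ (p.2.1 i)).hom.app (Opposite.op (SimplexCategory.mk q)) (Y.δ i p.1),
    p.2.face i)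

/-- The twisted degeneracy `s_i^δ(y, w) = (δ_{w(i)}⁻¹(s_i y), s_i w)` on `Y_q × Δ[n]_q`. -/
def twistedDegeneracy {n : ℕ} (Y : SSet.{u}) (δ : Fin (n + 1) → Aut Y) {q : ℕ}
    (i : Fin (q + 1)) :
    Y _⦋q⦌ × DeltaSimp n q → Y _⦋q + 1⦌ × DeltaSimp n (q + 1) :=
  fun p => ((δ (p.2.1 i)).inv.app (Opposite.op (SimplexCategory.mk (q + 1))) (Y.σ i p.1),
    p.2.degen i)

/-- auxiliary: product of list with pointwise-added exponents splits. -/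
lemma aux_zpow_add {G : Type*} [Group G] : ∀ {m : ℕ} (g : Fin m → G)
    (_ : ∀ k l, Commute (g k) (g l)) (e e' : Fin m → ℤ),
    (List.ofFn fun k => g k ^ (e k + e' k)).prod =
      (List.ofFn fun k => g k ^ e k).prod * (List.ofFn fun k => g k ^ e' k).prod :=
  fun {m} g h e e' => match m, g, h, e, e' with
  | 0, g, h, e, e' => by simp
  | m + 1, g, h, e, e' => by
    have IH := aux_zpow_add (fun k => g k.succ) (fun k l => h k.succ l.succ)
      (fun k => e k.succ) (fun k => e' k.succ)
    simp only [List.ofFn_succ, List.prod_cons] at *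
    rw [IH, zpow_add]
    have hc : Commute (g 0 ^ e' 0) ((List.ofFn fun k => g k.succ ^ e k.succ).prod) := by
      apply Commute.list_prod_right
      intro x hx
      obtain ⟨j, rfl⟩ := List.mem_ofFn.mp hx
      exact (h 0 j.succ).zpow_zpow _ _
    rw [mul_assoc, mul_assoc, ← mul_assoc (g 0 ^ e' 0), hc.eq, mul_assoc]

/-- auxiliary: product of indicator exponents is the single element. -/
lemma aux_indicator {G : Type*} [Group G] : ∀ {m : ℕ} (g : Fin m → G) (j : Fin m),
    (List.ofFn fun k => g k ^ (if k = j then (1 : ℤ) else 0)).prod = g j :=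
  fun {m} g j => match m, g, j with
  | m + 1, g, j => by
    induction j using Fin.cases with
    | zero =>
      simp only [List.ofFn_succ, List.prod_cons, if_pos rfl, zpow_one]
      rw [if_pos trivial, zpow_one]
      have : (List.ofFn fun k : Fin m => g k.succ ^ (if k.succ = (0 : Fin (m+1)) then (1:ℤ) else 0)).prod = 1 := by
        apply List.prod_eq_one
        intro x hx
        obtain ⟨j, rfl⟩ := List.mem_ofFn.mp hx
        simp [Fin.succ_ne_zero]
      rw [this, mul_one]
    | succ j' =>
      simp only [List.ofFn_succ, List.prod_cons]
      have h0 : ((0 : Fin (m+1)) = j'.succ) = False := by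
        simp [eq_comm, Fin.succ_ne_zero]
      rw [if_neg (by simp [eq_comm, Fin.succ_ne_zero]), zpow_zero, one_mul]
      have := aux_indicator (fun k : Fin m => g k.succ) j'
      simpa [Fin.succ_inj] using this

lemma mult_face {n q : ℕ} (k : Fin (n + 1)) (i : Fin (q + 2)) (w : DeltaSimp n (q + 1)) :
    (mult k w : ℤ) = (if w.1 i = k then 1 else 0) + mult k (w.face i) := by
  have h1 : mult k w = (if w.1 i = k then 1 else 0) + mult k (w.face i) := by
    unfold mult DeltaSimp.face
    rw [Finset.card_filter, Finset.card_filter]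
    rw [Fin.sum_univ_succAbove (fun p => if w.1 p = k then 1 else 0) i]
    rfl
  exact_mod_cast congrArg (Nat.cast : ℕ → ℤ) h1

lemma untwist_face {n : ℕ} (Y : SSet.{u}) (δ : Fin (n + 1) → Aut Y)
    (hcomm : ∀ k l : Fin (n + 1), Commute (δ k) (δ l))
    {q : ℕ} (i : Fin (q + 2)) (w : DeltaSimp n (q + 1)) :
    untwist Y δ (w.face i) = δ (w.1 i) * untwist Y δ w := by
  unfold untwist
  have hexp : ∀ k, (1 : ℤ) - mult k (w.face i) =
      ((1 : ℤ) - mult k w) + (if k = w.1 i then 1 else 0) := by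
    intro k
    have := mult_face k i w
    by_cases h : w.1 i = k
    · subst h; simp at this ⊢; omega
    · rw [if_neg h] at this
      rw [if_neg (fun hh => h hh.symm)]
      omega
  calc (List.ofFn fun k => (δ k) ^ ((1 : ℤ) - mult k (w.face i))).prod
      = (List.ofFn fun k => (δ k) ^ (((1 : ℤ) - mult k w) + (if k = w.1 i then 1 else 0))).prod := by
        simp only [hexp]
    _ = (List.ofFn fun k => (δ k) ^ ((1 : ℤ) - mult k w)).prod *
        (List.ofFn fun k => (δ k) ^ (if k = w.1 i then (1:ℤ) else 0)).prod :=
        aux_zpow_add δ hcomm _ _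
    _ = (List.ofFn fun k => (δ k) ^ ((1 : ℤ) - mult k w)).prod * δ (w.1 i) := by
        rw [aux_indicator δ (w.1 i)]
    _ = δ (w.1 i) * (List.ofFn fun k => (δ k) ^ ((1 : ℤ) - mult k w)).prod := by
        have hc : Commute (δ (w.1 i))
            ((List.ofFn fun k => (δ k) ^ ((1 : ℤ) - mult k w)).prod) := by
          apply Commute.list_prod_right
          intro x hx
          obtain ⟨j, rfl⟩ := List.mem_ofFn.mp hx
          exact (hcomm (w.1 i) j).zpow_right _
        exact hc.eq.symm

end TwistedDelta

/-- for pairwise commuting simplicial automorphisms `δ_0, …, δ_n` of a simplicial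
set `Y`, the map `α` intertwines the untwisted faces of `Y × Δ[n]` with the twisted faces:
`d_i^δ(α_q(y, w)) = α_{q−1}(d_i y, d_i w)`. -/
theorem TwistedDelta.alpha_intertwines_faces {n : ℕ} (Y : SSet.{u})
    (δ : Fin (n + 1) → Aut Y)
    (hcomm : ∀ k l : Fin (n + 1), Commute (δ k) (δ l))
    (q : ℕ) (i : Fin (q + 2)) (y : Y _⦋q + 1⦌) (w : DeltaSimp n (q + 1)) :
    twistedFace Y δ i (alphaMap Y δ (q + 1) (y, w)) =
      alphaMap Y δ q (Y.δ i y, w.face i) := by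
  unfold twistedFace alphaMap
  refine Prod.ext ?_ rfl
  dsimp only
  have hnat : Y.δ i ((untwist Y δ w).hom.app (Opposite.op (SimplexCategory.mk (q+1))) y) =
      (untwist Y δ w).hom.app (Opposite.op (SimplexCategory.mk q)) (Y.δ i y) := by
    have := ConcreteCategory.congr_hom ((untwist Y δ w).hom.naturality (SimplexCategory.δ i).op) y
    simpa [SimplicialObject.δ] using this.symm
  rw [hnat, untwist_face Y δ hcomm i w, Aut.Aut_mul_def]
  rfl
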